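/- For all integers d1, d2 ≥ 1 and all p ∈ [0,1], the functions α and β satisfy the system of equations (d1+1)·α(p) = p + d1·p·α(p)·β(p) and (d2+1)·β(p) = p + d2·p·α(p)·β(p). -/

import Mathlib

/-- κ = (d1+1)(d2+1). -/
noncomputable def frogKappa (d1 d2 : ℕ) : ℝ := ((d1 : ℝ) + 1) * ((d2 : ℝ) + 1)

/-- The discriminant Δ(p) = κ² − 2κ(d1+d2)p² + (d2−d1)²p⁴. -/
noncomputable def frogDelta (d1 d2 : ℕ) (p : ℝ) : ℝ :=
  (frogKappa d1 d2) ^ 2 - 2 * (frogKappa d1 d2) * ((d1 : ℝ) + (d2 : ℝ)) * p ^ 2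
    + ((d2 : ℝ) - (d1 : ℝ)) ^ 2 * p ^ 4

/-- α(p) = (κ + p²(d2−d1) − √Δ(p)) / (2 d2 (d1+1) p) for p ≠ 0, and α(0) = 0. -/
noncomputable def frogAlpha (d1 d2 : ℕ) (p : ℝ) : ℝ :=
  if p = 0 then 0 else
    (frogKappa d1 d2 + p ^ 2 * ((d2 : ℝ) - (d1 : ℝ)) - Real.sqrt (frogDelta d1 d2 p)) /
      (2 * (d2 : ℝ) * ((d1 : ℝ) + 1) * p)

/-- β(p) = (κ + p²(d1−d2) − √Δ(p)) / (2 d1 (d2+1) p) for p ≠ 0, and β(0) = 0. -/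
noncomputable def frogBeta (d1 d2 : ℕ) (p : ℝ) : ℝ :=
  if p = 0 then 0 else
    (frogKappa d1 d2 + p ^ 2 * ((d1 : ℝ) - (d2 : ℝ)) - Real.sqrt (frogDelta d1 d2 p)) /
      (2 * (d1 : ℝ) * ((d2 : ℝ) + 1) * p)

/-- For all d1, d2 ≥ 1 and p ∈ [0,1], α and β satisfy
(d1+1)α(p) = p + d1 p α(p) β(p) and (d2+1)β(p) = p + d2 p α(p) β(p). -/
theorem frog_alpha_beta_system (d1 d2 : ℕ) (hd1 : 1 ≤ d1) (hd2 : 1 ≤ d2)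
    (p : ℝ) (hp : p ∈ Set.Icc (0 : ℝ) 1) :
    ((d1 : ℝ) + 1) * frogAlpha d1 d2 p
      = p + (d1 : ℝ) * p * frogAlpha d1 d2 p * frogBeta d1 d2 p ∧
    ((d2 : ℝ) + 1) * frogBeta d1 d2 p
      = p + (d2 : ℝ) * p * frogAlpha d1 d2 p * frogBeta d1 d2 p := by
  obtain ⟨hp0, hp1⟩ := hp
  rcases eq_or_ne p 0 with rfl | hpne
  · simp [frogAlpha, frogBeta]
  have ha : (1:ℝ) ≤ (d1:ℝ) := by exact_mod_cast hd1
  have hb : (1:ℝ) ≤ (d2:ℝ) := by exact_mod_cast hd2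
  set a : ℝ := (d1:ℝ) with haa
  set b : ℝ := (d2:ℝ) with hbb
  have ha0 : a ≠ 0 := by linarith
  have hb0 : b ≠ 0 := by linarith
  have ha1 : a + 1 ≠ 0 := by linarith
  have hb1 : b + 1 ≠ 0 := by linarith
  have ht1 : p ^ 2 ≤ 1 := by nlinarith
  have ht0 : 0 ≤ p ^ 2 := sq_nonneg p
  have hΔ : 0 ≤ frogDelta d1 d2 p := by
    rw [frogDelta, frogKappa, ← haa, ← hbb]
    nlinarith [sq_nonneg (a*b - 1), sq_nonneg p,
      mul_nonneg (mul_nonneg (by linarith : (0:ℝ) ≤ a) (by linarith : (0:ℝ) ≤ b))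
        (by nlinarith : (0:ℝ) ≤ 1 - p^4),
      mul_nonneg (mul_nonneg (by linarith : (0:ℝ) ≤ a + b) (by linarith : (0:ℝ) ≤ 1 - p^2))
        (by nlinarith : (0:ℝ) ≤ ((a+1)*(b+1) - (a+b)*p^2) + (a*b+1))]
  set s : ℝ := Real.sqrt (frogDelta d1 d2 p) with hss
  have hs : s ^ 2 = (a+1)*(b+1) * ((a+1)*(b+1)) - 2 * ((a+1)*(b+1)) * (a + b) * p ^ 2
      + (b - a) ^ 2 * p ^ 4 := by
    rw [hss, Real.sq_sqrt hΔ, frogDelta, frogKappa, ← haa, ← hbb]; ring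
  simp only [frogAlpha, frogBeta, if_neg hpne, frogKappa, ← haa, ← hbb, ← hss]
  constructor
  · field_simp
    linear_combination (-1) * hs
  · field_simp
    linear_combination (-1) * hs
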